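/- arXiv:2209.06099 — 2 statements merged into one kernel-verified Lean document; each statement's English description precedes it below -/
import Mathlib

section
/- Let d ≥ 2. Define f : ℤ → ℤ ∪ {airplane indices} by the recursion: given m, write m = d²k + dℓ + n with ℓ,n ∈ {0,...,d-1}; if ℓ = n recurse on k; if ℓ ≠ n output the airplane index (n-ℓ if n>ℓ, else d-(ℓ-n)); with base cases f(0) = 'rabbit' and f(-1) = 'corabbit'. Then f is well-defined (the recursion terminates for every m ∈ ℤ) and f(m) = f(⌊m/d²⌋) whenever (d+1) | (m mod d²). -/
/-- Fuel-based version of the twisted-rabbit recursion. -/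
private def twg (d : ℤ) : ℕ → ℤ → ℤ ⊕ Bool
  | 0, _ => Sum.inr true
  | (fuel+1), m =>
    if m = 0 then Sum.inr true
    else if m = -1 then Sum.inr false
    else if (m % d ^ 2) / d = (m % d ^ 2) % d then twg d fuel (m / d ^ 2)
    else Sum.inl (if (m % d ^ 2) / d < (m % d ^ 2) % d
        then (m % d ^ 2) % d - (m % d ^ 2) / d
        else d - ((m % d ^ 2) / d - (m % d ^ 2) % d))

private lemma twg_dec (d : ℤ) (hd : 2 ≤ d) (m : ℤ) (h0 : m ≠ 0) (h1 : m ≠ -1) :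
    (m / d ^ 2).natAbs < m.natAbs := by
  have hD : (4:ℤ) ≤ d ^ 2 := by nlinarith
  have hDpos : (0:ℤ) < d ^ 2 := by linarith
  have hr0 : 0 ≤ m % d ^ 2 := Int.emod_nonneg m (by positivity)
  have hr1 : m % d ^ 2 < d ^ 2 := Int.emod_lt_of_pos m hDpos
  have heq : d ^ 2 * (m / d ^ 2) + m % d ^ 2 = m := Int.mul_ediv_add_emod m (d ^ 2)
  rcases lt_or_ge m 0 with hm | hm
  · have hq : m / d ^ 2 < 0 := Int.ediv_neg_of_neg_of_pos hm hDpos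
    have key : m < m / d ^ 2 := by
      rcases eq_or_lt_of_le (show m / d ^ 2 ≤ -1 by omega) with hq1 | hq1
      · -- q = -1 : then m = -d^2 + r ≤ -2 < -1 = q
        have : m ≤ -2 := by omega
        omega
      · -- q ≤ -2
        have hq2 : m / d ^ 2 ≤ -2 := by omega
        nlinarith [heq, hr1, hr0]
    omega
  · have hq : 0 ≤ m / d ^ 2 := Int.ediv_nonneg hm (le_of_lt hDpos)
    have key : m / d ^ 2 < m := by
      rcases eq_or_lt_of_le hq with hq1 | hq1
      · omega
      · nlinarith [heq, hr1, hr0]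
    omega

private lemma twg_stable (d : ℤ) (hd : 2 ≤ d) :
    ∀ f1 f2 m, m.natAbs < f1 → m.natAbs < f2 → twg d f1 m = twg d f2 m := by
  intro f1
  induction f1 with
  | zero => intro f2 m h; omega
  | succ f1 ih =>
    intro f2 m h1 h2
    cases f2 with
    | zero => omega
    | succ f2 =>
      by_cases h0 : m = 0
      · simp [twg, h0]
      by_cases hm1 : m = -1
      · simp [twg, hm1]
      have hdec := twg_dec d hd m h0 hm1
      simp only [twg, if_neg h0, if_neg hm1]
      by_cases hln : (m % d ^ 2) / d = (m % d ^ 2) % d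
      · rw [if_pos hln, if_pos hln]
        exact ih f2 (m / d ^ 2) (by omega) (by omega)
      · rw [if_neg hln, if_neg hln]

/-- `ℓ = n` as soon as `(d+1) ∣ r` for `0 ≤ r < d²`. -/
private lemma ln_eq (d : ℤ) (hd : 2 ≤ d) (r : ℤ) (h0 : 0 ≤ r) (h1 : r < d ^ 2)
    (hdvd : (d + 1) ∣ r) : r / d = r % d := by
  obtain ⟨j, hj⟩ := hdvd
  have hd0 : (0:ℤ) < d := by linarith
  have hj0 : 0 ≤ j := by nlinarith
  have hjd : j < d := by nlinarith
  have hrj : r = j + d * j := by linarith [hj]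
  rw [hrj, Int.add_mul_ediv_left j j (by omega), Int.add_mul_emod_self_left,
    Int.ediv_eq_zero_of_lt hj0 hjd, Int.emod_eq_of_lt hj0 hjd, zero_add]

/-- The twisted-rabbit reduction recursion is well-defined: there is a unique
`f : ℤ → ℤ ⊕ Bool` (with `Sum.inr true` = rabbit, `Sum.inr false` = corabbit,
`Sum.inl i` = the airplane index) with `f 0 = rabbit`, `f (-1) = corabbit`,
satisfying the recursion: writing `m = d²k + dℓ + n` with `ℓ,n ∈ {0,...,d-1}`,
if `ℓ = n` then `f m = f k`, else `f m` is the airplane index `n - ℓ` (if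
`n > ℓ`) or `d - (ℓ - n)` (if `n < ℓ`); moreover `f m = f ⌊m/d²⌋` whenever
`(d+1) ∣ (m mod d²)`. -/
theorem stmt14 (d : ℤ) (hd : 2 ≤ d) :
    ∃! f : ℤ → ℤ ⊕ Bool,
      f 0 = Sum.inr true ∧
      f (-1) = Sum.inr false ∧
      (∀ m : ℤ, m ≠ 0 → m ≠ -1 →
        (let ℓ := (m % d ^ 2) / d
         let n := (m % d ^ 2) % d
         f m = if ℓ = n then f (m / d ^ 2)
               else Sum.inl (if ℓ < n then n - ℓ else d - (ℓ - n)))) ∧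
      (∀ m : ℤ, (d + 1) ∣ (m % d ^ 2) → f m = f (m / d ^ 2)) := by
  have hD : (4:ℤ) ≤ d ^ 2 := by nlinarith
  have hDpos : (0:ℤ) < d ^ 2 := by linarith
  set f : ℤ → ℤ ⊕ Bool := fun m => twg d (m.natAbs + 1) m with hf
  have hstab : ∀ f1 m, m.natAbs < f1 → twg d f1 m = f m := by
    intro f1 m h
    exact twg_stable d hd f1 (m.natAbs + 1) m h (by omega)
  have p1 : f 0 = Sum.inr true := by simp [hf, twg]
  have p2 : f (-1) = Sum.inr false := by simp [hf, twg]
  have p3 : ∀ m : ℤ, m ≠ 0 → m ≠ -1 →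
      (let ℓ := (m % d ^ 2) / d
       let n := (m % d ^ 2) % d
       f m = if ℓ = n then f (m / d ^ 2)
             else Sum.inl (if ℓ < n then n - ℓ else d - (ℓ - n))) := by
    intro m h0 h1
    dsimp only
    have hdec := twg_dec d hd m h0 h1
    conv_lhs => rw [hf]
    simp only [twg, if_neg h0, if_neg h1]
    by_cases hln : (m % d ^ 2) / d = (m % d ^ 2) % d
    · rw [if_pos hln, if_pos hln]
      exact hstab m.natAbs (m / d ^ 2) (by omega)
    · rw [if_neg hln, if_neg hln]
  have hneg1div : (-1 : ℤ) / d ^ 2 = -1 := by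
    have := (Int.ediv_emod_unique (a := -1) (b := d ^ 2) (r := d ^ 2 - 1) (q := -1)
      hDpos).mpr ⟨by ring, by omega, by omega⟩
    exact this.1
  have p4 : ∀ m : ℤ, (d + 1) ∣ (m % d ^ 2) → f m = f (m / d ^ 2) := by
    intro m hdvd
    by_cases h0 : m = 0
    · rw [h0, Int.zero_ediv]
    by_cases h1 : m = -1
    · rw [h1, hneg1div]
    have hr0 : 0 ≤ m % d ^ 2 := Int.emod_nonneg m (by positivity)
    have hr1 : m % d ^ 2 < d ^ 2 := Int.emod_lt_of_pos m hDpos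
    have hln := ln_eq d hd (m % d ^ 2) hr0 hr1 hdvd
    have := p3 m h0 h1
    simpa only [if_pos hln] using this
  refine ⟨f, ⟨p1, p2, p3, p4⟩, ?_⟩
  rintro g ⟨q1, q2, q3, -⟩
  funext m
  have key : ∀ N : ℕ, ∀ m : ℤ, m.natAbs ≤ N → g m = f m := by
    intro N
    induction N with
    | zero =>
      intro m hm
      have : m = 0 := by omega
      rw [this, q1, p1]
    | succ N ih =>
      intro m hm
      by_cases h0 : m = 0
      · rw [h0, q1, p1]
      by_cases h1 : m = -1
      · rw [h1, q2, p2]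
      have hdec := twg_dec d hd m h0 h1
      have hg := q3 m h0 h1
      have hf3 := p3 m h0 h1
      dsimp only at hg hf3
      rw [hg, hf3]
      by_cases hln : (m % d ^ 2) / d = (m % d ^ 2) % d
      · rw [if_pos hln, if_pos hln, ih (m / d ^ 2) (by omega)]
      · rw [if_neg hln, if_neg hln]
  exact key m.natAbs m le_rfl
end

section
/- Let d ≥ 2 and S ≥ 1. Among integers m with 0 ≤ m < (d²)^S, for each fixed j ∈ {1,...,d-1}, the number of m whose reduction (via the recursion: repeatedly strip the last base-d² digit while it is divisible by d+1; output index determined by the first digit dℓ+n with ℓ≠n as j ≡ n-ℓ mod d) yields j is exactly ((d²)^S - d^S)/(d-1). -/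
/-- The least significant base-`d²` digit of `m` not divisible by `d+1`. -/
def firstBadDigit (d m : ℕ) : Option ℕ :=
  (Nat.digits (d ^ 2) m).find? (fun r => !(decide ((d + 1) ∣ r)))

/-- The airplane index produced by the reduction: strip base-`d²` digits
divisible by `d+1`; from the first digit `r = dℓ + n` with `ℓ ≠ n`, output
`n - ℓ` if `n > ℓ` and `d - (ℓ - n)` otherwise. -/
def airplaneIndex (d m : ℕ) : Option ℕ :=
  (firstBadDigit d m).map (fun r =>
    if r / d < r % d then r % d - r / d else d - (r / d - r % d))

/-- Airplane index of a single base-`d²` digit. -/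
def idx (d r : ℕ) : ℕ :=
  if r / d < r % d then r % d - r / d else d - (r / d - r % d)

lemma airplane_zero (d : ℕ) : airplaneIndex d 0 = none := by
  simp [airplaneIndex, firstBadDigit]

lemma airplane_step (d q r : ℕ) (hd : 2 ≤ d) (hr : r < d ^ 2) :
    airplaneIndex d (d ^ 2 * q + r) =
      if (d + 1) ∣ r then airplaneIndex d q else some (idx d r) := by
  rcases Nat.eq_zero_or_pos (d ^ 2 * q + r) with h0 | hpos
  · have hr0 : r = 0 := by omega
    have hq0 : d ^ 2 * q = 0 := by omega
    have hq : q = 0 := by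
      rcases Nat.mul_eq_zero.mp hq0 with h | h
      · exfalso; have : 4 ≤ d ^ 2 := by nlinarith
        omega
      · exact h
    subst hr0; subst hq
    simp [airplane_zero]
  · have hb : 1 < d ^ 2 := by nlinarith
    have hdig : Nat.digits (d ^ 2) (d ^ 2 * q + r) = r :: Nat.digits (d ^ 2) q := by
      rw [Nat.digits_def' hb hpos, Nat.mul_add_mod, Nat.mod_eq_of_lt hr,
        Nat.mul_add_div (by omega), Nat.div_eq_of_lt hr, Nat.add_zero]
    unfold airplaneIndex firstBadDigit
    rw [hdig]
    by_cases hdvd : (d + 1) ∣ r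
    · rw [List.find?_cons_of_neg (p := fun r => !(decide ((d + 1) ∣ r))) (a := r) (by simp [hdvd]), if_pos hdvd]
    · rw [List.find?_cons_of_pos (p := fun r => !(decide ((d + 1) ∣ r))) (a := r) (by simp [hdvd]), if_neg hdvd]
      rfl

/-- `(d+1) ∣ dℓ + n` iff `ℓ = n`, for `ℓ, n < d`. -/
lemma dvd_iff_eq (d ℓ n : ℕ) (hℓ : ℓ < d) (hn : n < d) :
    (d + 1) ∣ (d * ℓ + n) ↔ ℓ = n := by
  constructor
  · rintro ⟨k, hk⟩
    rw [add_mul, one_mul] at hk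
    rcases lt_trichotomy k ℓ with h | h | h
    · have h2 : d * (k + 1) ≤ d * ℓ := Nat.mul_le_mul_left d (by omega)
      rw [Nat.mul_succ] at h2
      omega
    · subst h; omega
    · have h2 : d * (ℓ + 1) ≤ d * k := Nat.mul_le_mul_left d (by omega)
      rw [Nat.mul_succ] at h2
      omega
  · rintro rfl
    exact ⟨ℓ, by ring⟩

lemma mod_facts (d j ℓ : ℕ) (hℓ : ℓ < d) (hj : j ≤ d - 1) :
    (ℓ + j < d ∧ (ℓ + j) % d = ℓ + j) ∨ (d ≤ ℓ + j ∧ (ℓ + j) % d = ℓ + j - d) := by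
  rcases lt_or_ge (ℓ + j) d with h | h
  · exact Or.inl ⟨h, Nat.mod_eq_of_lt h⟩
  · refine Or.inr ⟨h, ?_⟩
    rw [Nat.mod_eq_sub_mod h, Nat.mod_eq_of_lt (by omega)]

/-- Count of multiples of `d+1` below `d²`. -/
lemma bad_card (d : ℕ) (hd : 2 ≤ d) :
    ((Finset.range (d ^ 2)).filter (fun r => (d + 1) ∣ r)).card = d := by
  have h1d : (1 : ℕ) ≤ d := by omega
  have himg : (Finset.range (d ^ 2)).filter (fun r => (d + 1) ∣ r)
      = (Finset.range d).image (fun k => (d + 1) * k) := by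
    ext r
    simp only [Finset.mem_filter, Finset.mem_range, Finset.mem_image]
    constructor
    · rintro ⟨hr, k, hk⟩
      refine ⟨k, ?_, hk.symm⟩
      by_contra h
      have h2 : (d + 1) * d ≤ (d + 1) * k := Nat.mul_le_mul_left _ (by omega)
      have h3 : (d + 1) * d = d ^ 2 + d := by ring
      omega
    · rintro ⟨k, hk, rfl⟩
      refine ⟨?_, Dvd.intro k rfl⟩
      have h2 : (d + 1) * k ≤ (d + 1) * (d - 1) := Nat.mul_le_mul_left _ (by omega)
      have h3 : (d + 1) * (d - 1) + 1 = d ^ 2 := by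
        zify [h1d]; ring
      omega
  rw [himg, Finset.card_image_of_injective _ (mul_right_injective₀ (by omega)),
    Finset.card_range]

/-- Count of digits below `d²` yielding index `j`. -/
lemma good_card (d j : ℕ) (hd : 2 ≤ d) (hj1 : 1 ≤ j) (hj2 : j ≤ d - 1) :
    ((Finset.range (d ^ 2)).filter (fun r => ¬ (d + 1) ∣ r ∧ idx d r = j)).card = d := by
  have hd0 : 0 < d := by omega
  have h1d : (1 : ℕ) ≤ d := by omega
  have himg : (Finset.range (d ^ 2)).filter (fun r => ¬ (d + 1) ∣ r ∧ idx d r = j)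
      = (Finset.range d).image (fun ℓ => d * ℓ + (ℓ + j) % d) := by
    ext r
    simp only [Finset.mem_filter, Finset.mem_range, Finset.mem_image]
    constructor
    · rintro ⟨hr, hdvd, hidx⟩
      set ℓ := r / d with hℓdef
      set n := r % d with hndef
      have hn : n < d := Nat.mod_lt _ hd0
      have hrdn : r = d * ℓ + n := by
        rw [hℓdef, hndef]; exact (Nat.div_add_mod r d).symm
      have hℓ : ℓ < d := by
        by_contra h
        have hdd : d * d ≤ d * ℓ := Nat.mul_le_mul_left d (by omega)
        have hsq : d ^ 2 = d * d := by ring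
        omega
      have hne : ℓ ≠ n := by
        intro h
        apply hdvd
        rw [hrdn]
        exact (dvd_iff_eq d ℓ n hℓ hn).mpr h
      refine ⟨ℓ, hℓ, ?_⟩
      have hM := mod_facts d j ℓ hℓ hj2
      have hMn : (ℓ + j) % d = n := by
        unfold idx at hidx
        rw [← hℓdef, ← hndef] at hidx
        split_ifs at hidx <;> omega
      rw [hMn]
      exact hrdn.symm
    · rintro ⟨ℓ, hℓ, rfl⟩
      set n := (ℓ + j) % d with hndef
      have hn : n < d := Nat.mod_lt _ hd0
      have hM := mod_facts d j ℓ hℓ hj2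
      rw [← hndef] at hM
      have hne : ℓ ≠ n := by omega
      have hdiv : (d * ℓ + n) / d = ℓ := by
        rw [Nat.mul_add_div hd0, Nat.div_eq_of_lt hn, Nat.add_zero]
      have hmod : (d * ℓ + n) % d = n := by
        rw [Nat.mul_add_mod, Nat.mod_eq_of_lt hn]
      refine ⟨?_, ?_, ?_⟩
      · have hdd : d * ℓ ≤ d * (d - 1) := Nat.mul_le_mul_left d (by omega)
        have hsq : d * (d - 1) + d = d ^ 2 := by zify [h1d]; ring
        omega
      · rw [dvd_iff_eq d ℓ n hℓ hn]; exact hne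
      · unfold idx
        rw [hdiv, hmod]
        split_ifs <;> omega
  rw [himg, Finset.card_image_of_injOn, Finset.card_range]
  intro a ha b hb hab
  simp only [Finset.coe_range, Set.mem_Iio] at ha hb
  have hab' : d * a + (a + j) % d = d * b + (b + j) % d := hab
  have h1 : (d * a + (a + j) % d) / d = a := by
    rw [Nat.mul_add_div hd0, Nat.div_eq_of_lt (Nat.mod_lt _ hd0), Nat.add_zero]
  have h2 : (d * b + (b + j) % d) / d = b := by
    rw [Nat.mul_add_div hd0, Nat.div_eq_of_lt (Nat.mod_lt _ hd0), Nat.add_zero]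
  rw [← h1, ← h2, hab']

lemma inner_card (d j q : ℕ) (hd : 2 ≤ d) (hj1 : 1 ≤ j) (hj2 : j ≤ d - 1) :
    ((Finset.range (d ^ 2)).filter
        (fun r => airplaneIndex d (d ^ 2 * q + r) = some j)).card
      = if airplaneIndex d q = some j then 2 * d else d := by
  have hcongr : (Finset.range (d ^ 2)).filter
        (fun r => airplaneIndex d (d ^ 2 * q + r) = some j)
      = (Finset.range (d ^ 2)).filter
        (fun r => if (d + 1) ∣ r then airplaneIndex d q = some j else idx d r = j) := by
    apply Finset.filter_congr
    intro r hr
    rw [airplane_step d q r hd (Finset.mem_range.mp hr)]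
    split_ifs <;> simp
  rw [hcongr]
  by_cases hq : airplaneIndex d q = some j
  · rw [if_pos hq]
    have heq : (Finset.range (d ^ 2)).filter
          (fun r => if (d + 1) ∣ r then airplaneIndex d q = some j else idx d r = j)
        = (Finset.range (d ^ 2)).filter
          (fun r => (d + 1) ∣ r ∨ (¬ (d + 1) ∣ r ∧ idx d r = j)) := by
      apply Finset.filter_congr
      intro r _
      by_cases h : (d + 1) ∣ r <;> simp [h, hq]
    rw [heq, Finset.filter_or, Finset.card_union_of_disjoint, bad_card d hd,
      good_card d j hd hj1 hj2]
    · ring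
    · rw [Finset.disjoint_filter]
      intro x _ h1 h2
      exact h2.1 h1
  · rw [if_neg hq]
    have heq : (Finset.range (d ^ 2)).filter
          (fun r => if (d + 1) ∣ r then airplaneIndex d q = some j else idx d r = j)
        = (Finset.range (d ^ 2)).filter
          (fun r => ¬ (d + 1) ∣ r ∧ idx d r = j) := by
      apply Finset.filter_congr
      intro r _
      by_cases h : (d + 1) ∣ r <;> simp [h, hq]
    rw [heq, good_card d j hd hj1 hj2]

lemma card_filter_range_mul (P : ℕ → Prop) [DecidablePred P] (b n : ℕ) :
    ((Finset.range (b * n)).filter P).card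
      = ∑ q ∈ Finset.range n, ((Finset.range b).filter (fun r => P (b * q + r))).card := by
  induction n with
  | zero => simp
  | succ n ih =>
    rw [Finset.sum_range_succ, ← ih, Nat.mul_succ, Finset.range_add,
      Finset.filter_union, Finset.card_union_of_disjoint, Finset.filter_map,
      Finset.card_map]
    · rfl
    · apply Finset.disjoint_left.mpr
      intro a ha hb
      simp only [Finset.mem_filter, Finset.mem_range, Finset.mem_map,
        addLeftEmbedding_apply] at ha hb
      obtain ⟨⟨x, hx, rfl⟩, -⟩ := hb
      omega

lemma key (d j : ℕ) (hd : 2 ≤ d) (hj1 : 1 ≤ j) (hj2 : j ≤ d - 1) :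
    ∀ S : ℕ, (((Finset.range ((d ^ 2) ^ S)).filter
        (fun m => airplaneIndex d m = some j)).card) * (d - 1)
      = (d ^ 2) ^ S - d ^ S := by
  intro S
  induction S with
  | zero =>
    simp [Finset.range_one, Finset.filter_singleton, airplane_zero]
  | succ S ih =>
    have hstep : ((Finset.range ((d ^ 2) ^ (S + 1))).filter
          (fun m => airplaneIndex d m = some j)).card
        = d * (d ^ 2) ^ S
          + ((Finset.range ((d ^ 2) ^ S)).filter
              (fun m => airplaneIndex d m = some j)).card * d := by
      rw [pow_succ, mul_comm ((d ^ 2) ^ S) (d ^ 2),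
        card_filter_range_mul (fun m => airplaneIndex d m = some j) (d ^ 2) ((d ^ 2) ^ S)]
      have hterm : ∀ q ∈ Finset.range ((d ^ 2) ^ S),
          ((Finset.range (d ^ 2)).filter
            (fun r => airplaneIndex d (d ^ 2 * q + r) = some j)).card
          = d + (if airplaneIndex d q = some j then d else 0) := by
        intro q _
        rw [inner_card d j q hd hj1 hj2]
        split_ifs <;> ring
      rw [Finset.sum_congr rfl hterm, Finset.sum_add_distrib, Finset.sum_const,
        Finset.card_range, smul_eq_mul, ← Finset.sum_filter, Finset.sum_const,
        smul_eq_mul]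
      ring
    rw [hstep, add_mul]
    have ih' : ((Finset.range ((d ^ 2) ^ S)).filter
          (fun m => airplaneIndex d m = some j)).card * d * (d - 1)
        = ((d ^ 2) ^ S - d ^ S) * d := by
      rw [mul_right_comm, ih]
    rw [ih']
    have hle : d ^ S ≤ (d ^ 2) ^ S := Nat.pow_le_pow_left (by nlinarith) S
    have h1 : (d ^ 2) ^ (S + 1) = (d ^ 2) ^ S * d ^ 2 := pow_succ _ _
    have h2 : d ^ (S + 1) = d ^ S * d := pow_succ _ _
    rw [h1, h2]
    have hle3 : d ^ S * d ≤ (d ^ 2) ^ S * d ^ 2 :=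
      Nat.mul_le_mul hle (by nlinarith)
    zify [hle, hle3, show (1 : ℕ) ≤ d by omega]
    ring

/-- For `d ≥ 2`, `S ≥ 1`, and each `j ∈ {1,...,d-1}`, the number of
`m ∈ {0,...,(d²)^S - 1}` whose reduction yields airplane index `j` is exactly
`((d²)^S - d^S)/(d-1)`. -/
theorem stmt15 (d S j : ℕ) (hd : 2 ≤ d) (hS : 1 ≤ S)
    (hj1 : 1 ≤ j) (hj2 : j ≤ d - 1) :
    ((Finset.range ((d ^ 2) ^ S)).filter
        (fun m => airplaneIndex d m = some j)).card
      = ((d ^ 2) ^ S - d ^ S) / (d - 1) := by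
  exact (Nat.div_eq_of_eq_mul_left (by omega) (key d j hd hj1 hj2 S).symm).symm
end
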